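/- Strong continuity on C_rub: if v : ℝ^d → ℂ is bounded and uniformly continuous and satisfies lim_{τ→0} sup_{x∈ℝ^d} |v(e^{τS}x) − v(x)| = 0, then lim_{t→0⁺} sup_{x∈ℝ^d} |[T(t)v](x) − v(x)| = 0. -/

import Mathlib

open MeasureTheory
open Filter


/-- Rotation `e^{tS}x` given by the matrix exponential. -/
noncomputable def ouRot (d : ℕ) (S : Matrix (Fin d) (Fin d) ℝ) (t : ℝ)
    (x : EuclideanSpace ℝ (Fin d)) : EuclideanSpace ℝ (Fin d) :=
  WithLp.toLp 2 (Matrix.mulVec (NormedSpace.exp (t • S)) (WithLp.ofLp x))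

/-- The scalar complex Ornstein--Uhlenbeck kernel. -/
noncomputable def ouH (d : ℕ) (α δ : ℂ) (S : Matrix (Fin d) (Fin d) ℝ)
    (x ξ : EuclideanSpace ℝ (Fin d)) (t : ℝ) : ℂ :=
  (4 * (Real.pi : ℂ) * α * t) ^ (-(d : ℂ) / 2) *
    Complex.exp (-(δ * t) - ((‖ouRot d S t x - ξ‖ ^ 2 : ℝ) : ℂ) / (4 * α * t))

/-- The Ornstein--Uhlenbeck semigroup `[T(t)v](x) = ∫ H(x,ξ,t) v(ξ) dξ` for `t > 0`,
and `T(0)v = v`. -/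
noncomputable def ouT (d : ℕ) (α δ : ℂ) (S : Matrix (Fin d) (Fin d) ℝ) (t : ℝ)
    (v : EuclideanSpace ℝ (Fin d) → ℂ) (x : EuclideanSpace ℝ (Fin d)) : ℂ :=
  if t = 0 then v x else ∫ ξ : EuclideanSpace ℝ (Fin d), ouH d α δ S x ξ t * v ξ

namespace OUaux


noncomputable section

variable {d : ℕ}

lemma integrable_rexp_gauss {b : ℝ} (hb : 0 < b) :
    Integrable (fun y : EuclideanSpace ℝ (Fin d) => Real.exp (-b * ‖y‖^2)) := by
  have h := (GaussianFourier.integrable_cexp_neg_mul_sq_norm_add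
      (V := EuclideanSpace ℝ (Fin d)) (b := (b:ℂ)) (by simpa using hb) 0 0).norm
  refine h.congr (Filter.Eventually.of_forall fun y => ?_)
  simp [Complex.norm_exp, ← Complex.ofReal_pow]

lemma integral_rexp_gauss {b : ℝ} (hb : 0 < b) :
    ∫ y : EuclideanSpace ℝ (Fin d), Real.exp (-b * ‖y‖^2)
      = (Real.pi / b) ^ ((d:ℝ)/2) := by
  rw [GaussianFourier.integral_rexp_neg_mul_sq_norm hb]
  simp [finrank_euclideanSpace_fin]

lemma integrable_cexp_gauss {b : ℂ} (hb : 0 < b.re) :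
    Integrable (fun y : EuclideanSpace ℝ (Fin d) => Complex.exp (-b * (‖y‖^2:ℝ))) := by
  have h := GaussianFourier.integrable_cexp_neg_mul_sq_norm_add
      (V := EuclideanSpace ℝ (Fin d)) hb 0 0
  refine h.congr (Filter.Eventually.of_forall fun y => ?_)
  norm_num

lemma integral_cexp_gauss {b : ℂ} (hb : 0 < b.re) :
    ∫ y : EuclideanSpace ℝ (Fin d), Complex.exp (-b * (‖y‖^2:ℝ))
      = ((Real.pi) / b) ^ ((d:ℂ)/2) := by
  have h := GaussianFourier.integral_cexp_neg_mul_sq_norm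
      (V := EuclideanSpace ℝ (Fin d)) hb
  rw [finrank_euclideanSpace_fin] at h
  rw [← h]
  norm_num

/-- normalized exponent constant `c₀ = Re α / (4 |α|²)`. -/
def c0 (α : ℂ) : ℝ := α.re / (4 * Complex.normSq α)

lemma c0_pos {α : ℂ} (hα : 0 < α.re) : 0 < c0 α := by
  have hα0 : α ≠ 0 := by
    intro h; rw [h] at hα; simp at hα
  have := Complex.normSq_pos.mpr hα0
  unfold c0; positivity

lemma inv_re_eq {α : ℂ} (hα : 0 < α.re) {t : ℝ} (ht : 0 < t) :
    ((4*α*(t:ℂ))⁻¹).re = c0 α / t := by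
  have hα0 : α ≠ 0 := by
    intro h; rw [h] at hα; simp at hα
  have hns : Complex.normSq α ≠ 0 := by
    simpa using Complex.normSq_pos.mpr hα0
  have h1 : (4*α*(t:ℂ)) = ((4*t:ℝ):ℂ) * α := by push_cast; ring
  rw [h1, mul_inv, ← Complex.ofReal_inv, Complex.re_ofReal_mul, Complex.inv_re]
  unfold c0
  field_simp

/-- scalar prefactor of the kernel. -/
def cK (d : ℕ) (α δ : ℂ) (t : ℝ) : ℂ :=
  (4 * (Real.pi:ℂ) * α * t) ^ (-(d:ℂ)/2) * Complex.exp (-(δ * t))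

/-- gaussian factor of the kernel. -/
def gK (α : ℂ) (t : ℝ) (y : EuclideanSpace ℝ (Fin d)) : ℂ :=
  Complex.exp (-(4*α*(t:ℂ))⁻¹ * ((‖y‖^2 : ℝ) : ℂ))

lemma kernel_eq (α δ : ℂ) (S : Matrix (Fin d) (Fin d) ℝ) {t : ℝ} (ht : 0 < t)
    (x y : EuclideanSpace ℝ (Fin d)) :
    ouH d α δ S x (ouRot d S t x + y) t = cK d α δ t * gK α t y := by
  unfold ouH cK gK
  rw [sub_add_cancel_left, norm_neg]
  conv_rhs => rw [mul_assoc, ← Complex.exp_add]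
  congr 1
  ring

lemma hα_ne {α : ℂ} (hα : 0 < α.re) : α ≠ 0 := by
  intro h; rw [h] at hα; simp at hα

lemma base_ne {α : ℂ} (hα : 0 < α.re) {t : ℝ} (ht : 0 < t) :
    (4 * (Real.pi:ℂ) * α * (t:ℂ)) ≠ 0 := by
  have h1 : ((Real.pi:ℂ)) ≠ 0 := Complex.ofReal_ne_zero.mpr Real.pi_ne_zero
  have h2 : ((t:ℂ)) ≠ 0 := Complex.ofReal_ne_zero.mpr ht.ne'
  have h3 := hα_ne hα
  exact mul_ne_zero (mul_ne_zero (mul_ne_zero (by norm_num) h1) h3) h2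

lemma gK_re_pos {α : ℂ} (hα : 0 < α.re) {t : ℝ} (ht : 0 < t) :
    0 < ((4*α*(t:ℂ))⁻¹).re := by
  rw [inv_re_eq hα ht]
  exact div_pos (c0_pos hα) ht

lemma abs_gK {α : ℂ} (hα : 0 < α.re) {t : ℝ} (ht : 0 < t)
    (y : EuclideanSpace ℝ (Fin d)) :
    ‖gK α t y‖ = Real.exp (-(c0 α / t) * ‖y‖^2) := by
  unfold gK
  rw [Complex.norm_exp]
  congr 1
  have : (-(4*α*(t:ℂ))⁻¹ * ((‖y‖^2:ℝ):ℂ)).re = -((4*α*(t:ℂ))⁻¹).re * ‖y‖^2 := by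
    simp [Complex.mul_re, ← Complex.ofReal_pow]
  rw [this, inv_re_eq hα ht]

lemma abs_cK {α : ℂ} (δ : ℂ) (hα : 0 < α.re) {t : ℝ} (ht : 0 < t) :
    ‖cK d α δ t‖
      = ((4 * Real.pi * ‖α‖) ^ (-(d:ℝ)/2) * t ^ (-(d:ℝ)/2))
          * Real.exp (-(δ.re * t)) := by
  unfold cK
  have hz := base_ne hα ht
  have hw : (-(d:ℂ)/2) = (((-(d:ℝ)/2 : ℝ)):ℂ) := by push_cast; ring
  rw [norm_mul, hw, Complex.norm_cpow_of_ne_zero hz, Complex.norm_exp]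
  have h1 : ‖4 * (Real.pi:ℂ) * α * (t:ℂ)‖
      = (4 * Real.pi * ‖α‖) * t := by
    simp [norm_mul, Complex.norm_real, abs_of_pos ht, abs_of_pos Real.pi_pos]
  have h2 : (-(δ * (t:ℂ))).re = -(δ.re * t) := by simp [Complex.mul_re]
  rw [h1, h2]
  have h3 : ((4 * Real.pi * ‖α‖) * t) ^ (((-(d:ℝ)/2 : ℝ)):ℂ).re
      = (4 * Real.pi * ‖α‖) ^ (-(d:ℝ)/2) * t ^ (-(d:ℝ)/2) := by
    rw [Complex.ofReal_re]
    have hA : (0:ℝ) ≤ 4 * Real.pi * ‖α‖ := by positivity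
    exact Real.mul_rpow hA ht.le
  rw [h3]
  simp

lemma integrable_cgK {α : ℂ} (δ : ℂ) (hα : 0 < α.re) {t : ℝ} (ht : 0 < t) :
    Integrable (fun y : EuclideanSpace ℝ (Fin d) => cK d α δ t * gK α t y) :=
  (integrable_cexp_gauss (gK_re_pos hα ht)).const_mul _

lemma integrable_abs_cgK {α : ℂ} (δ : ℂ) (hα : 0 < α.re) {t : ℝ} (ht : 0 < t) :
    Integrable (fun y : EuclideanSpace ℝ (Fin d) => ‖cK d α δ t * gK α t y‖) := by
  have := (integrable_cgK (d := d) δ hα ht).norm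
  simpa using this

lemma intG {α : ℂ} (δ : ℂ) (hα : 0 < α.re) {t : ℝ} (ht : 0 < t) :
    ∫ y : EuclideanSpace ℝ (Fin d), cK d α δ t * gK α t y = Complex.exp (-(δ * t)) := by
  unfold gK
  rw [MeasureTheory.integral_const_mul, integral_cexp_gauss (gK_re_pos hα ht)]
  have hb : ((Real.pi:ℂ)) / (4*α*(t:ℂ))⁻¹ = 4 * (Real.pi:ℂ) * α * t := by
    rw [div_eq_mul_inv, inv_inv]; ring
  rw [hb]
  unfold cK
  have hz := base_ne hα ht
  rw [mul_right_comm, ← Complex.cpow_add _ _ hz]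
  have h0 : (-(d:ℂ)/2 + (d:ℂ)/2) = 0 := by ring
  rw [h0, Complex.cpow_zero, one_mul]

/-- uniform bound for the total mass of the absolute kernel, `t ∈ (0,1]`. -/
def M1 (d : ℕ) (α δ : ℂ) : ℝ :=
  (4*Real.pi*‖α‖) ^ (-(d:ℝ)/2) * (Real.pi / c0 α) ^ ((d:ℝ)/2) * Real.exp |δ.re|

lemma M1_pos {α : ℂ} (δ : ℂ) (hα : 0 < α.re) : 0 < M1 d α δ := by
  have h0 := c0_pos hα
  have hA : 0 < ‖α‖ := norm_pos_iff.mpr (hα_ne hα)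
  have hπ := Real.pi_pos
  unfold M1; positivity

lemma mass_eq {α : ℂ} (δ : ℂ) (hα : 0 < α.re) {t : ℝ} (ht : 0 < t) :
    ∫ y : EuclideanSpace ℝ (Fin d), ‖cK d α δ t * gK α t y‖
      = ‖cK d α δ t‖ * (Real.pi / (c0 α / t)) ^ ((d:ℝ)/2) := by
  simp_rw [norm_mul]
  rw [MeasureTheory.integral_const_mul]
  congr 1
  have h : (fun y : EuclideanSpace ℝ (Fin d) => ‖gK α t y‖)
      = fun y => Real.exp (-(c0 α / t) * ‖y‖^2) := funext fun y => abs_gK hα ht y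
  rw [h, integral_rexp_gauss (div_pos (c0_pos hα) ht)]

lemma mass_le {α : ℂ} (δ : ℂ) (hα : 0 < α.re) {t : ℝ} (ht : 0 < t) (ht1 : t ≤ 1) :
    ∫ y : EuclideanSpace ℝ (Fin d), ‖cK d α δ t * gK α t y‖ ≤ M1 d α δ := by
  have hc0 := c0_pos hα
  have hA : 0 < ‖α‖ := norm_pos_iff.mpr (hα_ne hα)
  have hπ := Real.pi_pos
  rw [mass_eq δ hα ht, abs_cK δ hα ht]
  have h4 : Real.pi / (c0 α / t) = (Real.pi / c0 α) * t := by field_simp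
  rw [h4, Real.mul_rpow (by positivity) ht.le]
  have htp : t ^ (-(d:ℝ)/2) * t ^ ((d:ℝ)/2) = 1 := by
    rw [← Real.rpow_add ht, show (-(d:ℝ)/2 + (d:ℝ)/2) = 0 by ring, Real.rpow_zero]
  have he : Real.exp (-(δ.re * t)) ≤ Real.exp |δ.re| := by
    rw [Real.exp_le_exp]
    nlinarith [mul_le_mul_of_nonneg_right (neg_le_abs δ.re) ht.le, abs_nonneg δ.re]
  calc (4 * Real.pi * ‖α‖) ^ (-(d:ℝ)/2) * t ^ (-(d:ℝ)/2) * Real.exp (-(δ.re * t)) *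
        ((Real.pi / c0 α) ^ ((d:ℝ)/2) * t ^ ((d:ℝ)/2))
      = ((4 * Real.pi * ‖α‖) ^ (-(d:ℝ)/2) * (Real.pi / c0 α) ^ ((d:ℝ)/2))
          * (t ^ (-(d:ℝ)/2) * t ^ ((d:ℝ)/2)) * Real.exp (-(δ.re * t)) := by ring
    _ = ((4 * Real.pi * ‖α‖) ^ (-(d:ℝ)/2) * (Real.pi / c0 α) ^ ((d:ℝ)/2))
          * Real.exp (-(δ.re * t)) := by rw [htp]; ring
    _ ≤ ((4 * Real.pi * ‖α‖) ^ (-(d:ℝ)/2) * (Real.pi / c0 α) ^ ((d:ℝ)/2))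
          * Real.exp |δ.re| := by
        refine mul_le_mul_of_nonneg_left he (by positivity)
    _ = M1 d α δ := by unfold M1; ring

/-- bound for the tail integral. -/
def TailB (d : ℕ) (α δ : ℂ) (r t : ℝ) : ℝ :=
  (M1 d α δ * Real.exp (c0 α * r^2)) * (t ^ (-(d:ℝ)/2) * Real.exp (-(c0 α * r^2)/t))

lemma TailB_nonneg {α : ℂ} (δ : ℂ) (hα : 0 < α.re) {r t : ℝ} (ht : 0 < t) :
    0 ≤ TailB d α δ r t := by
  have := M1_pos (d := d) δ hα
  unfold TailB; positivity

lemma tail_le {α : ℂ} (δ : ℂ) (hα : 0 < α.re) {t r : ℝ} (ht : 0 < t) (ht1 : t ≤ 1)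
    (hr : 0 < r) :
    ∫ y in {y : EuclideanSpace ℝ (Fin d) | r ≤ ‖y‖}, ‖cK d α δ t * gK α t y‖
      ≤ TailB d α δ r t := by
  have hc0 := c0_pos hα
  have hA : 0 < ‖α‖ := norm_pos_iff.mpr (hα_ne hα)
  have hπ := Real.pi_pos
  have hdiff : 0 ≤ c0 α / t - c0 α := by
    have h : c0 α ≤ c0 α / t := by
      rw [le_div_iff₀ ht]; nlinarith
    linarith
  set K : ℝ := ‖cK d α δ t‖ * Real.exp (-(c0 α / t - c0 α) * r^2) with hK
  have hint_f := integrable_abs_cgK (d := d) δ hα ht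
  have hint_g : Integrable (fun y : EuclideanSpace ℝ (Fin d) =>
      K * Real.exp (-(c0 α) * ‖y‖^2)) := (integrable_rexp_gauss hc0).const_mul K
  have hs : MeasurableSet {y : EuclideanSpace ℝ (Fin d) | r ≤ ‖y‖} :=
    measurableSet_le measurable_const measurable_norm
  have step1 : ∫ y in {y : EuclideanSpace ℝ (Fin d) | r ≤ ‖y‖},
      ‖cK d α δ t * gK α t y‖
      ≤ ∫ y in {y : EuclideanSpace ℝ (Fin d) | r ≤ ‖y‖}, K * Real.exp (-(c0 α) * ‖y‖^2) := by
    refine setIntegral_mono_on hint_f.integrableOn hint_g.integrableOn hs ?_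
    intro y hy
    have hy' : r ≤ ‖y‖ := hy
    rw [norm_mul, abs_gK hα ht, hK, mul_assoc, ← Real.exp_add]
    refine mul_le_mul_of_nonneg_left ?_ (norm_nonneg _)
    rw [Real.exp_le_exp]
    have h1 : r^2 ≤ ‖y‖^2 := by nlinarith [norm_nonneg y]
    nlinarith [mul_nonneg hdiff (sub_nonneg.mpr h1)]
  have step2 : ∫ y in {y : EuclideanSpace ℝ (Fin d) | r ≤ ‖y‖},
        K * Real.exp (-(c0 α) * ‖y‖^2)
      ≤ ∫ y : EuclideanSpace ℝ (Fin d), K * Real.exp (-(c0 α) * ‖y‖^2) := by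
    refine setIntegral_le_integral hint_g (Filter.Eventually.of_forall fun y => ?_)
    have h0 : (0:ℝ) ≤ ‖cK d α δ t‖ := norm_nonneg _
    have h00 : (0:ℝ) ≤ K := by rw [hK]; positivity
    positivity
  have step3 : ∫ y : EuclideanSpace ℝ (Fin d), K * Real.exp (-(c0 α) * ‖y‖^2)
      = K * (Real.pi / c0 α) ^ ((d:ℝ)/2) := by
    rw [MeasureTheory.integral_const_mul, integral_rexp_gauss hc0]
  refine le_trans step1 (le_trans step2 ?_)
  rw [step3, hK, abs_cK δ hα ht]
  have hsplit : Real.exp (-(c0 α / t - c0 α) * r ^ 2)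
      = Real.exp (c0 α * r^2) * Real.exp (-(c0 α * r^2)/t) := by
    rw [← Real.exp_add]
    congr 1
    field_simp
    ring
  rw [hsplit]
  unfold TailB M1
  have he : Real.exp (-(δ.re * t)) ≤ Real.exp |δ.re| := by
    rw [Real.exp_le_exp]
    nlinarith [mul_le_mul_of_nonneg_right (neg_le_abs δ.re) ht.le, abs_nonneg δ.re]
  calc (4 * Real.pi * ‖α‖) ^ (-(d:ℝ)/2) * t ^ (-(d:ℝ)/2) * Real.exp (-(δ.re * t)) *
        (Real.exp (c0 α * r^2) * Real.exp (-(c0 α * r^2)/t)) * (Real.pi / c0 α) ^ ((d:ℝ)/2)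
      ≤ (4 * Real.pi * ‖α‖) ^ (-(d:ℝ)/2) * t ^ (-(d:ℝ)/2) * Real.exp |δ.re| *
        (Real.exp (c0 α * r^2) * Real.exp (-(c0 α * r^2)/t)) * (Real.pi / c0 α) ^ ((d:ℝ)/2) := by
        have h1 : (0:ℝ) ≤ (4 * Real.pi * ‖α‖) ^ (-(d:ℝ)/2) * t ^ (-(d:ℝ)/2) := by
          positivity
        have h2 : (0:ℝ) ≤ (Real.exp (c0 α * r^2) * Real.exp (-(c0 α * r^2)/t)) := by positivity
        have h3 : (0:ℝ) ≤ (Real.pi / c0 α) ^ ((d:ℝ)/2) := by positivity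
        exact mul_le_mul_of_nonneg_right (mul_le_mul_of_nonneg_right
          (mul_le_mul_of_nonneg_left he h1) h2) h3
    _ = (4 * Real.pi * ‖α‖) ^ (-(d:ℝ)/2) * (Real.pi / c0 α) ^ ((d:ℝ)/2) *
          Real.exp |δ.re| * Real.exp (c0 α * r^2) *
          (t ^ (-(d:ℝ)/2) * Real.exp (-(c0 α * r^2)/t)) := by ring

lemma key {α : ℂ} (δ : ℂ) (S : Matrix (Fin d) (Fin d) ℝ) (hα : 0 < α.re)
    (v : EuclideanSpace ℝ (Fin d) → ℂ) (hv : Continuous v) {C : ℝ}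
    (hC : ∀ x, ‖v x‖ ≤ C) {t : ℝ} (ht : 0 < t)
    (x : EuclideanSpace ℝ (Fin d)) :
    ouT d α δ S t v x - v x
      = (∫ y : EuclideanSpace ℝ (Fin d),
            (cK d α δ t * gK α t y) * (v (ouRot d S t x + y) - v (ouRot d S t x)))
        + (Complex.exp (-(δ * t)) - 1) * v (ouRot d S t x)
        + (v (ouRot d S t x) - v x) := by
  set R := ouRot d S t x with hR
  have hg1 := integrable_cgK (d := d) δ hα ht
  have hmeas : AEStronglyMeasurable (fun y : EuclideanSpace ℝ (Fin d) => v (R + y)) volume :=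
    (hv.comp (continuous_const.add continuous_id)).aestronglyMeasurable
  have hg2 : Integrable (fun y : EuclideanSpace ℝ (Fin d) =>
      (cK d α δ t * gK α t y) * v (R + y)) := by
    have hb2 : ∃ B, ∀ y : EuclideanSpace ℝ (Fin d), ‖v (R + y)‖ ≤ B :=
      ⟨C, fun y => by simpa using hC (R+y)⟩
    have h := hg1.bdd_mul hmeas (Filter.Eventually.of_forall hb2.choose_spec)
    refine h.congr (Filter.Eventually.of_forall fun y => ?_)
    ring
  have hg3 : Integrable (fun y : EuclideanSpace ℝ (Fin d) =>
      (cK d α δ t * gK α t y) * (v (R + y) - v R)) := by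
    have hmeas' : AEStronglyMeasurable
        (fun y : EuclideanSpace ℝ (Fin d) => v (R + y) - v R) volume :=
      hmeas.sub aestronglyMeasurable_const
    have hb3 : ∃ B, ∀ y : EuclideanSpace ℝ (Fin d), ‖v (R + y) - v R‖ ≤ B := by
      refine ⟨C + C, fun y => (norm_sub_le _ _).trans ?_⟩
      have h1 := hC (R+y); have h2 := hC R
      linarith
    have h := hg1.bdd_mul hmeas' (Filter.Eventually.of_forall hb3.choose_spec)
    refine h.congr (Filter.Eventually.of_forall fun y => ?_)
    ring
  have hT : ouT d α δ S t v x = ∫ y : EuclideanSpace ℝ (Fin d),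
      (cK d α δ t * gK α t y) * v (R + y) := by
    rw [ouT, if_neg ht.ne']
    rw [← MeasureTheory.integral_add_left_eq_self
      (μ := (volume : Measure (EuclideanSpace ℝ (Fin d))))
      (fun ξ => ouH d α δ S x ξ t * v ξ) R]
    congr 1
    funext y
    rw [hR, kernel_eq α δ S ht x y]
  have hsub : ∫ y : EuclideanSpace ℝ (Fin d), (cK d α δ t * gK α t y) * (v (R + y) - v R)
      = (∫ y : EuclideanSpace ℝ (Fin d), (cK d α δ t * gK α t y) * v (R + y))
        - Complex.exp (-(δ * t)) * v R := by
    have h1 : (fun y : EuclideanSpace ℝ (Fin d) => (cK d α δ t * gK α t y) * (v (R + y) - v R))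
        = fun y => (cK d α δ t * gK α t y) * v (R + y) - (cK d α δ t * gK α t y) * v R := by
      funext y; ring
    rw [h1, MeasureTheory.integral_sub hg2 (hg1.mul_const (v R)),
      MeasureTheory.integral_mul_const, intG δ hα ht]
  rw [hT, hsub]
  ring

lemma abs_le {α : ℂ} (δ : ℂ) (S : Matrix (Fin d) (Fin d) ℝ) (hα : 0 < α.re)
    (v : EuclideanSpace ℝ (Fin d) → ℂ) (hv : Continuous v) {C : ℝ} (hC0 : 0 ≤ C)
    (hC : ∀ x, ‖v x‖ ≤ C) {t r ε₀ : ℝ} (ht : 0 < t) (ht1 : t ≤ 1)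
    (hr : 0 < r) (hε₀ : 0 ≤ ε₀)
    (hunif : ∀ a b : EuclideanSpace ℝ (Fin d), dist a b < r → ‖v a - v b‖ ≤ ε₀)
    (x : EuclideanSpace ℝ (Fin d)) :
    ‖ouT d α δ S t v x - v x‖
      ≤ ε₀ * M1 d α δ + 2*C * TailB d α δ r t
        + ‖Complex.exp (-(δ * t)) - 1‖ * C
        + ‖v (ouRot d S t x) - v x‖ := by
  rw [key δ S hα v hv hC ht x]
  set R := ouRot d S t x with hR
  have hg1 := integrable_cgK (d := d) δ hα ht
  have habs := integrable_abs_cgK (d := d) δ hα ht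
  have hmeas : AEStronglyMeasurable (fun y : EuclideanSpace ℝ (Fin d) => v (R + y)) volume :=
    (hv.comp (continuous_const.add continuous_id)).aestronglyMeasurable
  have hg3 : Integrable (fun y : EuclideanSpace ℝ (Fin d) =>
      (cK d α δ t * gK α t y) * (v (R + y) - v R)) := by
    have hmeas' : AEStronglyMeasurable
        (fun y : EuclideanSpace ℝ (Fin d) => v (R + y) - v R) volume :=
      hmeas.sub aestronglyMeasurable_const
    have hb3 : ∃ B, ∀ y : EuclideanSpace ℝ (Fin d), ‖v (R + y) - v R‖ ≤ B := by
      refine ⟨C + C, fun y => (norm_sub_le _ _).trans ?_⟩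
      have h1 := hC (R+y); have h2 := hC R
      linarith
    have h := hg1.bdd_mul hmeas' (Filter.Eventually.of_forall hb3.choose_spec)
    refine h.congr (Filter.Eventually.of_forall fun y => ?_)
    ring
  have hs' : MeasurableSet {y : EuclideanSpace ℝ (Fin d) | r ≤ ‖y‖} :=
    measurableSet_le measurable_const measurable_norm
  -- the step function bound
  set φ : EuclideanSpace ℝ (Fin d) → ℝ :=
    fun y => (if r ≤ ‖y‖ then 2*C else ε₀) * ‖cK d α δ t * gK α t y‖ with hφ
  have hφint : Integrable φ := by
    refine habs.bdd_mul (c := max (2*C) ε₀) ?_ (Filter.Eventually.of_forall fun y => ?_)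
    · exact ((Measurable.ite hs' measurable_const measurable_const)).aestronglyMeasurable
    · split_ifs
      · rw [Real.norm_eq_abs, abs_of_nonneg (by linarith)]; exact le_max_left _ _
      · rw [Real.norm_eq_abs, abs_of_nonneg hε₀]; exact le_max_right _ _
  have hintabs : Integrable (fun y : EuclideanSpace ℝ (Fin d) =>
      ‖(cK d α δ t * gK α t y) * (v (R + y) - v R)‖) := by
    have := hg3.norm
    simpa using this
  have h1 : ‖∫ y : EuclideanSpace ℝ (Fin d),
        (cK d α δ t * gK α t y) * (v (R + y) - v R)‖
      ≤ ∫ y : EuclideanSpace ℝ (Fin d),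
        ‖(cK d α δ t * gK α t y) * (v (R + y) - v R)‖ := by
    have := norm_integral_le_integral_norm
      (fun y : EuclideanSpace ℝ (Fin d) => (cK d α δ t * gK α t y) * (v (R + y) - v R))
      (μ := (volume : Measure (EuclideanSpace ℝ (Fin d))))
    simpa using this
  have h2 : ∫ y : EuclideanSpace ℝ (Fin d),
        ‖(cK d α δ t * gK α t y) * (v (R + y) - v R)‖
      ≤ ∫ y, φ y := by
    refine integral_mono hintabs hφint (fun y => ?_)
    rw [norm_mul, hφ]
    dsimp only
    split_ifs with h
    · have hΔ : ‖v (R + y) - v R‖ ≤ 2*C := by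
        have h1 := hC (R+y); have h2 := hC R
        have := norm_sub_le (v (R+y)) (v R)
        linarith
      rw [mul_comm]
      exact mul_le_mul_of_nonneg_right hΔ (norm_nonneg _)
    · push_neg at h
      have hd : dist (R + y) R < r := by
        rw [dist_eq_norm, add_sub_cancel_left]
        exact h
      have hΔ := hunif (R + y) R hd
      rw [mul_comm]
      exact mul_le_mul_of_nonneg_right hΔ (norm_nonneg _)
  have h3 : ∫ y, φ y ≤ 2*C * TailB d α δ r t + ε₀ * M1 d α δ := by
    rw [← MeasureTheory.integral_add_compl hs' hφint]
    have hbig : ∫ y in {y : EuclideanSpace ℝ (Fin d) | r ≤ ‖y‖}, φ y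
        ≤ 2*C * TailB d α δ r t := by
      have heq : ∫ y in {y : EuclideanSpace ℝ (Fin d) | r ≤ ‖y‖}, φ y
          = ∫ y in {y : EuclideanSpace ℝ (Fin d) | r ≤ ‖y‖},
              2*C * ‖cK d α δ t * gK α t y‖ := by
        refine setIntegral_congr_fun hs' (fun y hy => ?_)
        have hy' : r ≤ ‖y‖ := hy
        rw [hφ]; dsimp only; rw [if_pos hy']
      rw [heq, MeasureTheory.integral_const_mul]
      exact mul_le_mul_of_nonneg_left (tail_le δ hα ht ht1 hr) (by linarith)
    have hsmall : ∫ y in {y : EuclideanSpace ℝ (Fin d) | r ≤ ‖y‖}ᶜ, φ y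
        ≤ ε₀ * M1 d α δ := by
      have heq : ∫ y in {y : EuclideanSpace ℝ (Fin d) | r ≤ ‖y‖}ᶜ, φ y
          = ∫ y in {y : EuclideanSpace ℝ (Fin d) | r ≤ ‖y‖}ᶜ,
              ε₀ * ‖cK d α δ t * gK α t y‖ := by
        refine setIntegral_congr_fun hs'.compl (fun y hy => ?_)
        have hy' : ¬ r ≤ ‖y‖ := hy
        rw [hφ]; dsimp only; rw [if_neg hy']
      rw [heq, MeasureTheory.integral_const_mul]
      refine mul_le_mul_of_nonneg_left ?_ hε₀
      refine le_trans (setIntegral_le_integral habs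
        (Filter.Eventually.of_forall fun y => norm_nonneg _)) ?_
      exact mass_le δ hα ht ht1
    linarith
  refine le_trans (norm_add_le _ _) ?_
  refine add_le_add (le_trans (norm_add_le _ _) (add_le_add ?_ ?_)) le_rfl
  · refine le_trans h1 (le_trans h2 ?_)
    linarith
  · rw [norm_mul]
    exact mul_le_mul_of_nonneg_left (hC R) (norm_nonneg _)


lemma tendsto_W (s : ℝ) {k : ℝ} (hk : 0 < k) :
    Tendsto (fun t : ℝ => t ^ (-s) * Real.exp (-k/t)) (nhdsWithin 0 (Set.Ioi 0)) (nhds 0) := by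
  have h := (tendsto_rpow_mul_exp_neg_mul_atTop_nhds_zero s k hk).comp tendsto_inv_nhdsGT_zero
  refine Tendsto.congr' ?_ h
  filter_upwards [self_mem_nhdsWithin] with t ht
  have ht' : (0:ℝ) < t := ht
  show (t⁻¹) ^ s * Real.exp (-k * t⁻¹) = t ^ (-s) * Real.exp (-k/t)
  rw [Real.inv_rpow ht'.le, ← Real.rpow_neg ht'.le]
  congr 1

end

end OUaux

/-- strong continuity of the Ornstein--Uhlenbeck semigroup on `C_rub`:
`sup_x |[T(t)v](x) - v(x)| → 0` as `t → 0⁺`. -/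
theorem ouSemigroup_strong_continuity_Crub
    (d : ℕ) (hd : 1 ≤ d) (α δ : ℂ) (hα : 0 < α.re)
    (S : Matrix (Fin d) (Fin d) ℝ) (hS : S.transpose = -S)
    (v : EuclideanSpace ℝ (Fin d) → ℂ)
    (hvb : ∃ C : ℝ, ∀ x, ‖v x‖ ≤ C)
    (hvu : UniformContinuous v)
    (hvrot : Filter.Tendsto
      (fun τ : ℝ => ⨆ x : EuclideanSpace ℝ (Fin d), ‖v (ouRot d S τ x) - v x‖)
      (nhds 0) (nhds 0)) :
    Filter.Tendsto
      (fun t : ℝ => ⨆ x : EuclideanSpace ℝ (Fin d), ‖ouT d α δ S t v x - v x‖)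
      (nhdsWithin 0 (Set.Ioi 0)) (nhds 0) := by
  classical
  obtain ⟨C, hC⟩ := hvb
  have hC0 : 0 ≤ C := le_trans (norm_nonneg _) (hC 0)
  have hv : Continuous v := hvu.continuous
  have hM := OUaux.M1_pos (d := d) δ hα
  have hc0 := OUaux.c0_pos (α := α) hα
  rw [Metric.tendsto_nhds]
  intro ε hε
  have hε₀pos : 0 < ε / (4 * (OUaux.M1 d α δ + 1)) := by positivity
  obtain ⟨r, hr, hur⟩ := Metric.uniformContinuous_iff.mp hvu _ hε₀pos
  set ε₀ := ε / (4 * (OUaux.M1 d α δ + 1)) with hε₀def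
  have hunif : ∀ a b : EuclideanSpace ℝ (Fin d), dist a b < r →
      ‖v a - v b‖ ≤ ε₀ := by
    intro a b h
    have h2 := hur h
    rw [Complex.dist_eq] at h2
    exact h2.le
  have ev2 : ∀ᶠ t : ℝ in nhdsWithin 0 (Set.Ioi 0), t ≤ 1 := by
    filter_upwards [Ioo_mem_nhdsGT_of_mem (by norm_num : (0:ℝ) ∈ Set.Ico (0:ℝ) 1)] with t ht
    exact ht.2.le
  have ev3 : ∀ᶠ t : ℝ in nhdsWithin 0 (Set.Ioi 0),
      (2*C+1) * OUaux.TailB d α δ r t < ε/4 := by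
    have hk : 0 < OUaux.c0 α * r^2 := by positivity
    have h2 := (OUaux.tendsto_W ((d:ℝ)/2) hk).const_mul
      ((2*C+1) * (OUaux.M1 d α δ * Real.exp (OUaux.c0 α * r^2)))
    rw [mul_zero] at h2
    have htb : Filter.Tendsto (fun t : ℝ => (2*C+1) * OUaux.TailB d α δ r t)
        (nhdsWithin 0 (Set.Ioi 0)) (nhds 0) := by
      refine h2.congr (fun t => ?_)
      unfold OUaux.TailB
      rw [neg_div]
      ring
    exact htb.eventually_lt_const (by positivity)
  have ev4 : ∀ᶠ t : ℝ in nhdsWithin 0 (Set.Ioi 0),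
      ‖Complex.exp (-(δ * t)) - 1‖ * C < ε/4 := by
    have c1 : Continuous fun t : ℝ => ‖Complex.exp (-(δ * t)) - 1‖ * C := by
      have hcc : Continuous fun t : ℝ => Complex.exp (-(δ * t)) - 1 := by
        refine Continuous.sub ?_ continuous_const
        exact Complex.continuous_exp.comp (((continuous_const.mul Complex.continuous_ofReal)).neg)
      exact (continuous_norm.comp hcc).mul continuous_const
    have h2 : Filter.Tendsto (fun t : ℝ => ‖Complex.exp (-(δ * t)) - 1‖ * C)
        (nhds (0:ℝ)) (nhds 0) := by
      have h3 := c1.tendsto 0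
      simpa using h3
    exact (h2.mono_left nhdsWithin_le_nhds).eventually_lt_const (by positivity)
  have ev5 : ∀ᶠ t : ℝ in nhdsWithin 0 (Set.Ioi 0),
      (⨆ x : EuclideanSpace ℝ (Fin d), ‖v (ouRot d S t x) - v x‖) < ε/4 :=
    (hvrot.mono_left nhdsWithin_le_nhds).eventually_lt_const (by positivity)
  filter_upwards [self_mem_nhdsWithin, ev2, ev3, ev4, ev5] with t htmem ht1 h3 h4 h5
  have ht' : (0:ℝ) < t := htmem
  rw [Real.dist_0_eq_abs,
    abs_of_nonneg (Real.iSup_nonneg fun x => norm_nonneg _)]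
  have hbdd : BddAbove (Set.range fun x : EuclideanSpace ℝ (Fin d) =>
      ‖v (ouRot d S t x) - v x‖) := by
    refine ⟨C + C, ?_⟩
    rintro z ⟨x, rfl⟩
    have hn := norm_sub_le (v (ouRot d S t x)) (v x)
    have h1 := hC (ouRot d S t x); have h2 := hC x
    dsimp only
    linarith
  have htb0 : 0 ≤ OUaux.TailB d α δ r t := OUaux.TailB_nonneg δ hα ht'
  have hω0 : 0 ≤ ⨆ x : EuclideanSpace ℝ (Fin d), ‖v (ouRot d S t x) - v x‖ :=
    Real.iSup_nonneg fun x => norm_nonneg _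
  have habsc0 : 0 ≤ ‖Complex.exp (-(δ * t)) - 1‖ := norm_nonneg _
  have hperx : ∀ x : EuclideanSpace ℝ (Fin d),
      ‖ouT d α δ S t v x - v x‖
        ≤ ε₀ * OUaux.M1 d α δ + 2*C * OUaux.TailB d α δ r t
          + ‖Complex.exp (-(δ * t)) - 1‖ * C
          + (⨆ x : EuclideanSpace ℝ (Fin d), ‖v (ouRot d S t x) - v x‖) := by
    intro x
    refine (OUaux.abs_le δ S hα v hv hC0 hC ht' ht1 hr hε₀pos.le hunif x).trans ?_
    have h6 := le_ciSup hbdd x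
    linarith
  have hB0 : 0 ≤ ε₀ * OUaux.M1 d α δ + 2*C * OUaux.TailB d α δ r t
      + ‖Complex.exp (-(δ * t)) - 1‖ * C
      + (⨆ x : EuclideanSpace ℝ (Fin d), ‖v (ouRot d S t x) - v x‖) := by
    have n1 : 0 ≤ ε₀ * OUaux.M1 d α δ := mul_nonneg hε₀pos.le hM.le
    have n2 : 0 ≤ 2*C * OUaux.TailB d α δ r t := mul_nonneg (by linarith) htb0
    have n3 : 0 ≤ ‖Complex.exp (-(δ * t)) - 1‖ * C := mul_nonneg habsc0 hC0
    linarith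
  refine lt_of_le_of_lt (Real.iSup_le hperx hB0) ?_
  have b1 : ε₀ * OUaux.M1 d α δ < ε/4 := by
    rw [hε₀def, div_mul_eq_mul_div, div_lt_div_iff₀ (by positivity) (by norm_num)]
    nlinarith
  have b2 : 2*C * OUaux.TailB d α δ r t < ε/4 := by
    nlinarith
  linarith
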